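/- For all real β > 0 and τ > 0, the following Jacobi theta transformation of the fermionic Matsubara sum holds: Σ_{n ∈ ℤ} exp(−τ · π²(2n+1)²/β²) = (β/(2√(πτ))) · Σ_{n ∈ ℤ} (−1)^n · exp(−n² β²/(4τ)), both series being absolutely convergent. (The left-hand side is the Gaussian sum over the fermionic Matsubara frequencies ω_n = π(2n+1)/β, and the right-hand side is (β/(2√(πτ))) · ϑ₄(0, e^{−β²/(4τ)}) with ϑ₄ the fourth Jacobi theta function.) -/

import Mathlib

open MeasureTheory Filter

private lemma stmt9_summable_bound {T : ℝ} (hT : 0 < T) (S : ℝ) :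
    Summable (fun n : ℤ => Real.exp (-Real.pi * (T * n ^ 2 - 2 * S * |(n : ℝ)|))) := by
  simpa using summable_pow_mul_jacobiTheta₂_term_bound S hT 0

private lemma stmt9_sq_lemma (z w : ℂ) :
    (z + Complex.I * w) ^ 2 = z ^ 2 + 2 * Complex.I * z * w - w ^ 2 := by
  linear_combination w ^ 2 * Complex.I_sq

private lemma stmt9_neg_one (n : ℤ) :
    (((-1 : ℝ) ^ n : ℝ) : ℂ) = Complex.exp ((n : ℂ) * (Real.pi * Complex.I)) := by
  rw [Complex.exp_int_mul, Complex.exp_pi_mul_I]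
  push_cast
  ring

/-- Jacobi theta transformation of the fermionic Matsubara sum: for `β, τ > 0`,
`∑_{n∈ℤ} exp(−τ π²(2n+1)²/β²) = (β/(2√(πτ))) ∑_{n∈ℤ} (−1)ⁿ exp(−n²β²/(4τ))`,
both series converging absolutely. -/
theorem stmt9 (β τ : ℝ) (hβ : 0 < β) (hτ : 0 < τ) :
    Summable (fun n : ℤ =>
      Real.exp (-(τ * (Real.pi ^ 2 * (2 * (n : ℝ) + 1) ^ 2)) / β ^ 2)) ∧
    Summable (fun n : ℤ =>
      (-1 : ℝ) ^ n * Real.exp (-((n : ℝ) ^ 2 * β ^ 2) / (4 * τ))) ∧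
    ∑' n : ℤ, Real.exp (-(τ * (Real.pi ^ 2 * (2 * (n : ℝ) + 1) ^ 2)) / β ^ 2)
      = β / (2 * Real.sqrt (Real.pi * τ)) *
          ∑' n : ℤ, (-1 : ℝ) ^ n * Real.exp (-((n : ℝ) ^ 2 * β ^ 2) / (4 * τ)) := by
  have hπ := Real.pi_pos
  set c : ℝ := τ * Real.pi ^ 2 / β ^ 2 with hc_def
  have hc : 0 < c := by positivity
  -- Summability of the LHS
  have hS1 : Summable (fun n : ℤ =>
      Real.exp (-(τ * (Real.pi ^ 2 * (2 * (n : ℝ) + 1) ^ 2)) / β ^ 2)) := by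
    refine Summable.of_nonneg_of_le (fun n => (Real.exp_pos _).le) (fun n => ?_)
      (stmt9_summable_bound (T := 4 * c / Real.pi) (by positivity) (2 * c / Real.pi))
    rw [Real.exp_le_exp]
    have h2 : -(τ * (Real.pi ^ 2 * (2 * (n : ℝ) + 1) ^ 2)) / β ^ 2
        = -c * (2 * (n : ℝ) + 1) ^ 2 := by
      rw [hc_def]; field_simp
    have h3 : -Real.pi * (4 * c / Real.pi * (n : ℝ) ^ 2
        - 2 * (2 * c / Real.pi) * |(n : ℝ)|)
        = -4 * c * (n : ℝ) ^ 2 + 4 * c * |(n : ℝ)| := by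
      field_simp; ring
    rw [h2, h3]
    nlinarith [mul_nonneg hc.le
      (show (0 : ℝ) ≤ |(n : ℝ)| + (n : ℝ) by
        have := neg_le_abs (n : ℝ); linarith)]
  -- Summability of the RHS
  have hS2 : Summable (fun n : ℤ =>
      (-1 : ℝ) ^ n * Real.exp (-((n : ℝ) ^ 2 * β ^ 2) / (4 * τ))) := by
    rw [← summable_abs_iff]
    have heq : ∀ n : ℤ, |(-1 : ℝ) ^ n * Real.exp (-((n : ℝ) ^ 2 * β ^ 2) / (4 * τ))|
        = Real.exp (-((n : ℝ) ^ 2 * β ^ 2) / (4 * τ)) := by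
      intro n
      rw [abs_mul, abs_of_pos (Real.exp_pos _)]
      rcases Int.even_or_odd n with h | h
      · rw [h.neg_one_zpow, abs_one, one_mul]
      · rw [h.neg_one_zpow, abs_neg, abs_one, one_mul]
    simp only [heq]
    refine Summable.of_nonneg_of_le (fun n => (Real.exp_pos _).le) (fun n => ?_)
      (stmt9_summable_bound (T := β ^ 2 / (4 * τ) / Real.pi) (by positivity) 0)
    rw [Real.exp_le_exp]
    have h4 : -Real.pi * (β ^ 2 / (4 * τ) / Real.pi * (n : ℝ) ^ 2 - 2 * 0 * |(n : ℝ)|)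
        = -((n : ℝ) ^ 2 * β ^ 2) / (4 * τ) := by
      field_simp; ring
    rw [h4]
  refine ⟨hS1, hS2, ?_⟩
  -- Main identity via Poisson summation
  set a : ℝ := 4 * Real.pi * τ / β ^ 2 with ha_def
  have ha : 0 < a := by positivity
  have hβC : (β : ℂ) ≠ 0 := by exact_mod_cast hβ.ne'
  have hτC : (τ : ℂ) ≠ 0 := by exact_mod_cast hτ.ne'
  have hπC : (Real.pi : ℂ) ≠ 0 := by exact_mod_cast hπ.ne'
  have haC' : ((a : ℝ) : ℂ) = 4 * (Real.pi : ℂ) * (τ : ℂ) / (β : ℂ) ^ 2 := by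
    rw [ha_def]; push_cast; ring
  have key := Complex.tsum_exp_neg_quadratic (a := ((a : ℝ) : ℂ))
    (by rwa [Complex.ofReal_re]) (-((a : ℝ) : ℂ) / 2)
  -- the square-root factor
  have hsq : (1 : ℂ) / ((a : ℝ) : ℂ) ^ ((1 : ℂ) / 2)
      = ((β / (2 * Real.sqrt (Real.pi * τ)) : ℝ) : ℂ) := by
    rw [show ((1 : ℂ) / 2) = ((1 / 2 : ℝ) : ℂ) by norm_num,
      ← Complex.ofReal_cpow ha.le, ← Complex.ofReal_one, ← Complex.ofReal_div]
    congr 1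
    rw [← Real.sqrt_eq_rpow]
    have h4 : a = (2 * Real.sqrt (Real.pi * τ) / β) ^ 2 := by
      rw [div_pow, mul_pow, Real.sq_sqrt (by positivity : (0:ℝ) ≤ Real.pi * τ)]
      rw [ha_def]; ring
    rw [h4, Real.sqrt_sq (by positivity), one_div_div]
  rw [hsq, haC'] at key
  set A : ℂ := 4 * (Real.pi : ℂ) * (τ : ℂ) / (β : ℂ) ^ 2 with hA_def
  set C : ℂ := Complex.exp ((Real.pi : ℂ) * A / 4) with hC_def
  have hC : C ≠ 0 := Complex.exp_ne_zero _
  have e1 : ∀ n : ℤ, Complex.exp (-(Real.pi : ℂ) * A * (n : ℂ) ^ 2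
      + 2 * (Real.pi : ℂ) * (-A / 2) * (n : ℂ))
      = C * (Real.exp (-(τ * (Real.pi ^ 2 * (2 * (n : ℝ) + 1) ^ 2)) / β ^ 2) : ℂ) := by
    intro n
    rw [hC_def, Complex.ofReal_exp, ← Complex.exp_add]
    congr 1
    rw [hA_def]
    push_cast
    field_simp
    ring
  have e2 : ∀ n : ℤ, Complex.exp (-(Real.pi : ℂ) / A
      * ((n : ℂ) + Complex.I * (-A / 2)) ^ 2)
      = C * (((-1 : ℝ) ^ n * Real.exp (-((n : ℝ) ^ 2 * β ^ 2) / (4 * τ)) : ℝ) : ℂ) := by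
    intro n
    rw [Complex.ofReal_mul, Complex.ofReal_exp, stmt9_neg_one, hC_def,
      ← Complex.exp_add, ← Complex.exp_add, stmt9_sq_lemma]
    congr 1
    rw [hA_def]
    have h9 : -(Real.pi : ℂ) / (4 * (Real.pi : ℂ) * (τ : ℂ) / (β : ℂ) ^ 2)
        = -(β : ℂ) ^ 2 / (4 * (τ : ℂ)) := by
      rw [div_div_eq_mul_div,
        show (4 * (Real.pi : ℂ) * (τ : ℂ)) = (Real.pi : ℂ) * (4 * (τ : ℂ)) by ring,
        show -(Real.pi : ℂ) * (β : ℂ) ^ 2 = (Real.pi : ℂ) * (-(β : ℂ) ^ 2) by ring,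
        mul_div_mul_left _ _ hπC]
    rw [h9]
    push_cast
    field_simp [hβC, hτC, hπC]
    ring
  simp only [e1, e2] at key
  rw [tsum_mul_left, tsum_mul_left, ← Complex.ofReal_tsum, ← Complex.ofReal_tsum] at key
  have key2 : C * ((∑' n : ℤ,
        Real.exp (-(τ * (Real.pi ^ 2 * (2 * (n : ℝ) + 1) ^ 2)) / β ^ 2) : ℝ) : ℂ)
      = C * (((β / (2 * Real.sqrt (Real.pi * τ)) : ℝ) : ℂ) *
        ((∑' n : ℤ, (-1 : ℝ) ^ n * Real.exp (-((n : ℝ) ^ 2 * β ^ 2) / (4 * τ)) : ℝ) : ℂ)) := by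
    rw [key]; ring
  have key3 := mul_left_cancel₀ hC key2
  rw [← Complex.ofReal_mul] at key3
  exact_mod_cast key3
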